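/- Let A ⊆ ℝ^d be a nonempty finite set with mean μ = (1/|A|)∑_{x∈A} x, and let S ⊆ ℝ^d be a nonempty finite set of centers. Let T ≥ (7/3)·φ_{{μ}}(S) be a threshold and set W = ∑_{y∈A} min{φ_{{y}}(S), T}, assumed positive. Then ∑_{x∈A} (min{φ_{{x}}(S), T}/W) · φ_A(S ∪ {x}) ≤ 64·φ_A({μ}); i.e., if a point x is sampled from A with probability proportional to the thresholded value min{φ_{{x}}(S), T}, the expected cost of A after adding x as a center is at most 64·φ_A({μ}). -/
import Mathlib


open Finset

open scoped Classical

/-- `phiPt x S` is the squared distance from `x` to its nearest center in `S`,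
i.e. `min_{s ∈ S} ‖x - s‖²`. -/
noncomputable def phiPt {d : ℕ} (x : EuclideanSpace ℝ (Fin d))
    (S : Finset (EuclideanSpace ℝ (Fin d))) : ℝ :=
  sInf ((fun s => ‖x - s‖ ^ 2) '' (S : Set (EuclideanSpace ℝ (Fin d))))

/-- `phi A S = ∑_{x ∈ A} min_{s ∈ S} ‖x - s‖²`, the `k`-means cost of centers `S` on `A`. -/
noncomputable def phi {d : ℕ} (A S : Finset (EuclideanSpace ℝ (Fin d))) : ℝ :=
  ∑ x ∈ A, phiPt x S

/-- The mean (centroid) of a finite set of points. -/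
noncomputable def mean {d : ℕ} (A : Finset (EuclideanSpace ℝ (Fin d))) :
    EuclideanSpace ℝ (Fin d) :=
  (A.card : ℝ)⁻¹ • ∑ x ∈ A, x

/-- `rho X S z` is the cost of the centers `S` on `X` after discarding the `z`
points of `X` farthest from `S`: the minimum of `phi Y S` over `Y ⊆ X` with
`|Y| = |X| - z`. -/
noncomputable def rho {d : ℕ} (X S : Finset (EuclideanSpace ℝ (Fin d))) (z : ℕ) : ℝ :=
  sInf ((fun Y : Finset (EuclideanSpace ℝ (Fin d)) => phi Y S) ''
    {Y : Finset (EuclideanSpace ℝ (Fin d)) | Y ⊆ X ∧ Y.card = X.card - z})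

set_option maxHeartbeats 1000000

lemma phiPt_nonneg' {d : ℕ} (x : EuclideanSpace ℝ (Fin d))
    (S : Finset (EuclideanSpace ℝ (Fin d))) : 0 ≤ phiPt x S := by
  apply Real.sInf_nonneg
  rintro r ⟨s, -, rfl⟩
  positivity

lemma phiPt_le' {d : ℕ} {x s : EuclideanSpace ℝ (Fin d)}
    {S : Finset (EuclideanSpace ℝ (Fin d))} (hs : s ∈ S) :
    phiPt x S ≤ ‖x - s‖ ^ 2 := by
  apply csInf_le
  · exact ⟨0, by rintro r ⟨t, -, rfl⟩; positivity⟩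
  · exact ⟨s, by simpa using hs, rfl⟩

lemma phiPt_exists' {d : ℕ} {x : EuclideanSpace ℝ (Fin d)}
    {S : Finset (EuclideanSpace ℝ (Fin d))} (hS : S.Nonempty) :
    ∃ s ∈ S, phiPt x S = ‖x - s‖ ^ 2 := by
  have hne : ((fun s => ‖x - s‖ ^ 2) '' (S : Set _)).Nonempty :=
    ⟨_, ⟨hS.choose, by simpa using hS.choose_spec, rfl⟩⟩
  obtain ⟨s, hsS, hs⟩ := hne.csInf_mem (S.finite_toSet.image _)
  exact ⟨s, by simpa using hsS, hs.symm⟩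

lemma phiPt_singleton' {d : ℕ} (x μ : EuclideanSpace ℝ (Fin d)) :
    phiPt x {μ} = ‖x - μ‖ ^ 2 := by
  simp [phiPt]

lemma sq_tri {d : ℕ} (a b c : EuclideanSpace ℝ (Fin d)) :
    ‖a - c‖ ^ 2 ≤ 2 * ‖a - b‖ ^ 2 + 2 * ‖b - c‖ ^ 2 := by
  have h := dist_triangle a b c
  simp only [dist_eq_norm] at h
  have h2 : ‖a - c‖ ^ 2 ≤ (‖a - b‖ + ‖b - c‖) ^ 2 :=
    pow_le_pow_left₀ (norm_nonneg _) h 2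
  nlinarith [sq_nonneg (‖a - b‖ - ‖b - c‖)]

/-- If a point `x` is sampled from `A` with probability proportional to
the thresholded value `min{φ_{{x}}(S), T}` where `T ≥ (7/3)·φ_{{μ}}(S)`, the expected cost
of `A` after adding `x` as a center is at most `64·φ_A({μ})`. -/
theorem stmt12 {d : ℕ} (A S : Finset (EuclideanSpace ℝ (Fin d)))
    (hA : A.Nonempty) (hS : S.Nonempty)
    (T : ℝ) (hT : T ≥ (7 / 3) * phiPt (mean A) S)
    (hW : 0 < ∑ y ∈ A, min (phiPt y S) T) :
    ∑ x ∈ A, (min (phiPt x S) T / (∑ y ∈ A, min (phiPt y S) T)) * phi A (insert x S)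
      ≤ 64 * phi A {mean A} := by
  set μ := mean A with hμdef
  set m := phiPt μ S with hmdef
  set W := ∑ y ∈ A, min (phiPt y S) T with hWdef
  set n := (A.card : ℝ) with hndef
  have hm0 : (0:ℝ) ≤ m := phiPt_nonneg' _ _
  have hφ0 : ∀ y, 0 ≤ phiPt y S := fun y => phiPt_nonneg' _ _
  have hTpos : 0 < T := by
    by_contra h
    push_neg at h
    have : W ≤ 0 := Finset.sum_nonpos fun y _ => le_trans (min_le_right _ _) h
    linarith
  have hΔeq : phi A {μ} = ∑ x ∈ A, ‖x - μ‖ ^ 2 :=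
    Finset.sum_congr rfl fun x _ => phiPt_singleton' x μ
  set Δ := ∑ x ∈ A, ‖x - μ‖ ^ 2 with hΔdef
  have hΔ0 : (0:ℝ) ≤ Δ := Finset.sum_nonneg fun x _ => sq_nonneg _
  -- upper bound on phiPt x S
  obtain ⟨s₀, hs₀S, hs₀⟩ := phiPt_exists' (x := μ) hS
  have hupper : ∀ x, phiPt x S ≤ 2 * m + 2 * ‖x - μ‖ ^ 2 := by
    intro x
    have h1 : phiPt x S ≤ ‖x - s₀‖ ^ 2 := phiPt_le' hs₀S
    have h2 := sq_tri x μ s₀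
    rw [← hs₀] at h2
    linarith
  -- lower bound: m ≤ 2 φ_y + 2 r_y
  have hlower : ∀ y, m ≤ 2 * phiPt y S + 2 * ‖y - μ‖ ^ 2 := by
    intro y
    obtain ⟨s, hsS, hsy⟩ := phiPt_exists' (x := y) hS
    have h1 : m ≤ ‖μ - s‖ ^ 2 := phiPt_le' hsS
    have h2 := sq_tri μ y s
    rw [← hsy, norm_sub_rev μ y] at h2
    linarith
  -- n * m ≤ 2W + 2Δ
  have hnm : n * m ≤ 2 * W + 2 * Δ := by
    have h1 : ∀ y ∈ A, m / 2 - ‖y - μ‖ ^ 2 ≤ min (phiPt y S) T := by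
      intro y _
      refine le_min (by linarith [hlower y]) ?_
      have := sq_nonneg ‖y - μ‖
      linarith
    have h2 : ∑ y ∈ A, (m / 2 - ‖y - μ‖ ^ 2) ≤ W := Finset.sum_le_sum h1
    rw [Finset.sum_sub_distrib, Finset.sum_const, nsmul_eq_mul] at h2
    rw [hndef]
    linarith
  have hwnn : ∀ x, 0 ≤ min (phiPt x S) T := fun x => le_min (hφ0 x) hTpos.le
  -- per-point bound on phi A (insert x S)
  have hkey : ∀ x ∈ A,
      min (phiPt x S) T * phi A (insert x S) ≤
        2 * Δ * min (phiPt x S) T + 2 * ‖x - μ‖ ^ 2 * W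
          + 2 * m * min W (2 * n * ‖x - μ‖ ^ 2) := by
    intro x _
    set r := ‖x - μ‖ ^ 2 with hrdef
    have hr0 : (0:ℝ) ≤ r := sq_nonneg _
    set g := ∑ y ∈ A, min (phiPt y S) (2 * r) with hgdef
    have hg0 : (0:ℝ) ≤ g :=
      Finset.sum_nonneg fun y _ => le_min (hφ0 y) (by linarith)
    -- step a : phi A (insert x S) ≤ 2Δ + g
    have hstepa : phi A (insert x S) ≤ 2 * Δ + g := by
      have hpt : ∀ y ∈ A, phiPt y (insert x S) ≤
          2 * ‖y - μ‖ ^ 2 + min (phiPt y S) (2 * r) := by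
        intro y _
        have h1 : phiPt y (insert x S) ≤ phiPt y S := by
          obtain ⟨s, hsS, hsy⟩ := phiPt_exists' (x := y) hS
          rw [hsy]
          exact phiPt_le' (Finset.mem_insert_of_mem hsS)
        have h2 : phiPt y (insert x S) ≤ ‖y - x‖ ^ 2 :=
          phiPt_le' (Finset.mem_insert_self x S)
        have h3 : ‖y - x‖ ^ 2 ≤ 2 * ‖y - μ‖ ^ 2 + 2 * r := by
          have := sq_tri y μ x
          rw [norm_sub_rev μ x] at this
          exact this
        rcases le_total (phiPt y S) (2 * r) with h | h
        · rw [min_eq_left h]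
          have := sq_nonneg ‖y - μ‖
          linarith
        · rw [min_eq_right h]
          linarith
      calc phi A (insert x S) = ∑ y ∈ A, phiPt y (insert x S) := rfl
        _ ≤ ∑ y ∈ A, (2 * ‖y - μ‖ ^ 2 + min (phiPt y S) (2 * r)) :=
            Finset.sum_le_sum hpt
        _ = 2 * Δ + g := by
            rw [Finset.sum_add_distrib, ← Finset.mul_sum]
    -- step b : w * g ≤ 2 r W + 2 m min(W, 2 n r)
    have hstepb : min (phiPt x S) T * g ≤ 2 * r * W + 2 * m * min W (2 * n * r) := by
      have hminW0 : 0 ≤ min W (2 * n * r) := le_min hW.le (by positivity)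
      rcases le_or_gt T (2 * r) with hc | hc
      · -- g ≤ (2r/T) * W
        have hgW : g ≤ (2 * r / T) * W := by
          rw [hWdef, Finset.mul_sum]
          apply Finset.sum_le_sum
          intro y _
          rcases le_total (phiPt y S) T with h | h
          · rw [min_eq_left h]
            have h1 : (1:ℝ) ≤ 2 * r / T := (one_le_div hTpos).mpr hc
            have h2 : min (phiPt y S) (2 * r) ≤ phiPt y S := min_le_left _ _
            nlinarith [hφ0 y]
          · rw [min_eq_right h, div_mul_cancel₀ (2 * r) (ne_of_gt hTpos)]
            exact min_le_right _ _
        have h4 : min (phiPt x S) T * g ≤ T * ((2 * r / T) * W) := by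
          apply mul_le_mul (min_le_right _ _) hgW hg0 hTpos.le
        have h5 : T * ((2 * r / T) * W) = 2 * r * W := by
          field_simp
        nlinarith [mul_nonneg hm0 hminW0]
      · -- 2r < T
        have hgW : g ≤ W := by
          apply Finset.sum_le_sum
          intro y _
          exact min_le_min (le_refl _) hc.le
        have hgn : g ≤ 2 * n * r := by
          have : g ≤ ∑ _y ∈ A, 2 * r :=
            Finset.sum_le_sum fun y _ => min_le_right _ _
          rw [Finset.sum_const, nsmul_eq_mul] at this
          rw [hndef]
          linarith
        have hgmin : g ≤ min W (2 * n * r) := le_min hgW hgn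
        have hwφ : min (phiPt x S) T ≤ 2 * m + 2 * r := le_trans (min_le_left _ _) (hupper x)
        calc min (phiPt x S) T * g ≤ (2 * m + 2 * r) * g :=
              mul_le_mul_of_nonneg_right hwφ hg0
          _ = 2 * m * g + 2 * r * g := by ring
          _ ≤ 2 * m * min W (2 * n * r) + 2 * r * W := by
              have := mul_le_mul_of_nonneg_left hgmin (by linarith : (0:ℝ) ≤ 2 * m)
              have := mul_le_mul_of_nonneg_left hgW (by linarith : (0:ℝ) ≤ 2 * r)
              linarith
          _ = 2 * r * W + 2 * m * min W (2 * n * r) := by ring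
    calc min (phiPt x S) T * phi A (insert x S)
        ≤ min (phiPt x S) T * (2 * Δ + g) :=
          mul_le_mul_of_nonneg_left hstepa (hwnn x)
      _ = 2 * Δ * min (phiPt x S) T + min (phiPt x S) T * g := by ring
      _ ≤ 2 * Δ * min (phiPt x S) T + (2 * r * W + 2 * m * min W (2 * n * r)) := by
          linarith [hstepb]
      _ = 2 * Δ * min (phiPt x S) T + 2 * r * W + 2 * m * min W (2 * n * r) := by ring
  -- sum up
  have hsum : ∑ x ∈ A, min (phiPt x S) T * phi A (insert x S) ≤ 16 * Δ * W := by
    have h1 : ∑ x ∈ A, min (phiPt x S) T * phi A (insert x S) ≤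
        ∑ x ∈ A, (2 * Δ * min (phiPt x S) T + 2 * ‖x - μ‖ ^ 2 * W
          + 2 * m * min W (2 * n * ‖x - μ‖ ^ 2)) := Finset.sum_le_sum hkey
    have e1 : ∑ x ∈ A, 2 * Δ * min (phiPt x S) T = 2 * Δ * W := by
      have e : ∑ x ∈ A, 2 * Δ * min (phiPt x S) T
          = (∑ x ∈ A, min (phiPt x S) T) * (2 * Δ) := by
        rw [Finset.sum_mul]
        exact Finset.sum_congr rfl fun x _ => by ring
      rw [e, ← hWdef]; ring
    have e2 : ∑ x ∈ A, 2 * ‖x - μ‖ ^ 2 * W = 2 * Δ * W := by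
      have e : ∑ x ∈ A, 2 * ‖x - μ‖ ^ 2 * W
          = (∑ x ∈ A, ‖x - μ‖ ^ 2) * (2 * W) := by
        rw [Finset.sum_mul]
        exact Finset.sum_congr rfl fun x _ => by ring
      rw [e, ← hΔdef]; ring
    have e3 : ∑ x ∈ A, 2 * m * min W (2 * n * ‖x - μ‖ ^ 2)
        = 2 * m * ∑ x ∈ A, min W (2 * n * ‖x - μ‖ ^ 2) := by
      rw [Finset.mul_sum]
    have h2 : ∑ x ∈ A, (2 * Δ * min (phiPt x S) T + 2 * ‖x - μ‖ ^ 2 * W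
          + 2 * m * min W (2 * n * ‖x - μ‖ ^ 2))
        = 2 * Δ * W + 2 * Δ * W + 2 * m * ∑ x ∈ A, min W (2 * n * ‖x - μ‖ ^ 2) := by
      rw [Finset.sum_add_distrib, Finset.sum_add_distrib, e1, e2, e3]
    have h3 : 2 * m * ∑ x ∈ A, min W (2 * n * ‖x - μ‖ ^ 2) ≤ 12 * Δ * W := by
      rcases le_or_gt W (2 * Δ) with hc | hc
      · have h4 : ∑ x ∈ A, min W (2 * n * ‖x - μ‖ ^ 2) ≤ n * W := by
          have : ∑ x ∈ A, min W (2 * n * ‖x - μ‖ ^ 2) ≤ ∑ _x ∈ A, W :=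
            Finset.sum_le_sum fun x _ => min_le_left _ _
          rw [Finset.sum_const, nsmul_eq_mul] at this
          rw [hndef]; exact this
        have h5 : 2 * m * ∑ x ∈ A, min W (2 * n * ‖x - μ‖ ^ 2) ≤ 2 * m * (n * W) :=
          mul_le_mul_of_nonneg_left h4 (by linarith)
        nlinarith [hnm, hW]
      · have h4 : ∑ x ∈ A, min W (2 * n * ‖x - μ‖ ^ 2) ≤ 2 * n * Δ := by
          have : ∑ x ∈ A, min W (2 * n * ‖x - μ‖ ^ 2) ≤
              ∑ x ∈ A, 2 * n * ‖x - μ‖ ^ 2 :=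
            Finset.sum_le_sum fun x _ => min_le_right _ _
          rw [← Finset.mul_sum] at this
          rw [hΔdef]; exact this
        have h5 : 2 * m * ∑ x ∈ A, min W (2 * n * ‖x - μ‖ ^ 2) ≤ 2 * m * (2 * n * Δ) :=
          mul_le_mul_of_nonneg_left h4 (by linarith)
        nlinarith [hnm, hΔ0]
    linarith
  -- conclude
  have hLHS : ∑ x ∈ A, (min (phiPt x S) T / W) * phi A (insert x S)
      = (∑ x ∈ A, min (phiPt x S) T * phi A (insert x S)) / W := by
    rw [Finset.sum_div]
    exact Finset.sum_congr rfl fun x _ => by rw [div_mul_eq_mul_div]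
  rw [hLHS, hΔeq, div_le_iff₀ hW]
  nlinarith [hsum, mul_nonneg hΔ0 hW.le]
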